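/- In ℂ[[t]] the following identity of formal power series holds: 1 + Σ_{n≥1} ( (1/2)·binom(2n,n) + n + 1 − 2ⁿ ) · tⁿ/n! = (1/2)·e^{2t}·( (1+t)·Σ_{k≥0} t^{2k}/(k!)² − Σ_{k≥0} t^{2k+1}/(k!·(k+1)!) − t·Σ_{k≥0} t^{2k+2}/(k!·(k+2)!) ) + 1/2 + (1+t)·e^{t} − e^{2t}. (The left-hand side is the exponential codimension series of E⊗E, the tensor square of the Grassmann algebra, whose codimensions are c₀(E⊗E) = 1 and c_n(E⊗E) = (1/2)binom(2n,n) + n + 1 − 2ⁿ for n ≥ 1; the three inner series are I₀(2t), I₁(2t) and I₂(2t), where I_ν denotes the modified Bessel function of the first kind.) -/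

import Mathlib

/-- The formal exponential series `e^(βt) = ∑ βⁿ tⁿ/n!`. -/
noncomputable def expPS (β : ℂ) : PowerSeries ℂ :=
  PowerSeries.mk fun n => β ^ n / n.factorial

/-- The series `∑_{k≥0} t^(2k)/(k!)²`, i.e. `I₀(2t)` where `I₀` is the modified
Bessel function of the first kind. -/
noncomputable def besselZero : PowerSeries ℂ :=
  PowerSeries.mk fun n =>
    if n % 2 = 0 then 1 / ((n / 2).factorial * (n / 2).factorial) else 0

/-- The series `∑_{k≥0} t^(2k+1)/(k!·(k+1)!)`, i.e. `I₁(2t)`. -/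
noncomputable def besselOne : PowerSeries ℂ :=
  PowerSeries.mk fun n =>
    if n % 2 = 1 then 1 / (((n - 1) / 2).factorial * (((n - 1) / 2) + 1).factorial) else 0

/-- The series `∑_{k≥0} t^(2k+2)/(k!·(k+2)!)`, i.e. `I₂(2t)`. -/
noncomputable def besselTwo : PowerSeries ℂ :=
  PowerSeries.mk fun n =>
    if 2 ≤ n ∧ n % 2 = 0 then
      1 / (((n - 2) / 2).factorial * (((n - 2) / 2) + 2).factorial) else 0

section Aux
open Polynomial Finset

private lemma key (n : ℕ) :
    ∑ k ∈ Finset.range (n+1), 2 ^ (k - (n - k)) * k.choose (n - k) * n.choose k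
      = (2*n).choose n := by
  have h1 : ((X + 1 : Polynomial ℕ)) ^ (2*n)
      = ∑ k ∈ Finset.range (n+1),
          X ^ k * (X + C 2) ^ k * C (n.choose k) := by
    rw [pow_mul]
    have h2 : ((X + 1 : Polynomial ℕ)) ^ 2 = X * (X + C 2) + 1 := by
      rw [map_ofNat]; ring
    rw [h2, add_pow]
    refine Finset.sum_congr rfl fun k hk => ?_
    rw [mul_pow, one_pow, mul_one]
    simp
  have h3 := congrArg (fun p => Polynomial.coeff p n) h1
  simp only [coeff_X_add_one_pow, Nat.cast_id] at h3
  rw [h3, Polynomial.finset_sum_coeff]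
  refine Finset.sum_congr rfl fun k hk => ?_
  rw [Finset.mem_range] at hk
  have hk' : k ≤ n := Nat.lt_succ_iff.mp hk
  have e1 : ∀ p : Polynomial ℕ, (X ^ k * p).coeff n = p.coeff (n - k) := by
    intro p
    conv_lhs => rw [show n = n - k + k by omega]
    rw [Polynomial.coeff_X_pow_mul]
  rw [mul_assoc (X ^ k : Polynomial ℕ), e1, Polynomial.coeff_mul_C,
    Polynomial.coeff_X_add_C_pow]
  push_cast
  ring

private lemma choose_aux (n m : ℕ) (h : m ≤ n) :
    n.choose m * (n - m).choose m = n.choose (2*m) * (2*m).choose m := by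
  rcases le_or_gt (2*m) n with h2 | h2
  · rw [Nat.choose_mul (n := n) (by omega : m ≤ 2*m), show 2*m - m = m by omega]
  · simp [Nat.choose_eq_zero_of_lt h2, Nat.choose_eq_zero_of_lt (show n - m < m by omega)]

private lemma key2 (n : ℕ) :
    ∑ m ∈ Finset.range (n+1), n.choose (2*m) * (2*m).choose m * 2 ^ (n - 2*m)
      = (2*n).choose n := by
  rw [← key n,
    ← Finset.sum_range_reflect (fun k => 2 ^ (k - (n - k)) * k.choose (n - k) * n.choose k) (n+1)]
  refine Finset.sum_congr rfl fun m hm => ?_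
  rw [Finset.mem_range] at hm
  have hm' : m ≤ n := Nat.lt_succ_iff.mp hm
  have e1 : n + 1 - 1 - m = n - m := by omega
  have e2 : n - (n - m) = m := by omega
  rw [e1, e2, Nat.choose_symm hm', ← choose_aux n m hm', show n - m - m = n - 2*m by omega]
  ring

private lemma sum_pair {M : Type*} [AddCommMonoid M] (g : ℕ → M) (N : ℕ) :
    ∑ j ∈ Finset.range (2*N), g j = ∑ m ∈ Finset.range N, (g (2*m) + g (2*m+1)) := by
  induction N with
  | zero => simp
  | succ N ih =>
    rw [Finset.sum_range_succ, ← ih, show 2*(N+1) = 2*N+1+1 by omega,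
      Finset.sum_range_succ, Finset.sum_range_succ, add_assoc]

private lemma keyJ (n : ℕ) :
    ∑ j ∈ Finset.range (n+1),
      (if j % 2 = 0 then n.choose j * j.choose (j/2) * 2^(n-j) else 0)
      = (2*n).choose n := by
  have hpad : ∑ j ∈ Finset.range (n+1),
        (if j % 2 = 0 then n.choose j * j.choose (j/2) * 2^(n-j) else 0)
      = ∑ j ∈ Finset.range (2*(n+1)),
        (if j % 2 = 0 then n.choose j * j.choose (j/2) * 2^(n-j) else 0) := by
    apply Finset.sum_subset
    · intro x hx
      rw [Finset.mem_range] at *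
      omega
    · intro x hx hnx
      rw [Finset.mem_range] at hnx
      by_cases h : x % 2 = 0
      · simp [h, Nat.choose_eq_zero_of_lt (show n < x by omega)]
      · simp [h]
  rw [hpad, _root_.sum_pair, ← key2 n]
  refine Finset.sum_congr rfl fun m hm => ?_
  have h1 : (2*m) % 2 = 0 := by omega
  have h2 : (2*m+1) % 2 = 1 := by omega
  have h3 : (2*m) / 2 = m := by omega
  rw [if_pos h1, if_neg (by omega), h3, add_zero]

private lemma fact_id (p : ℕ) :
    (0:ℂ) + 1 / ((p+1).factorial * (p+1).factorial)
      - 1 / ((p+1).factorial * (p+2).factorial)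
      - 1 / (p.factorial * (p+2).factorial) = 0 := by
  have f1 : ((p+1).factorial : ℂ) ≠ 0 := Nat.cast_ne_zero.mpr (Nat.factorial_ne_zero _)
  have f2 : ((p+2).factorial : ℂ) ≠ 0 := Nat.cast_ne_zero.mpr (Nat.factorial_ne_zero _)
  have f3 : ((p).factorial : ℂ) ≠ 0 := Nat.cast_ne_zero.mpr (Nat.factorial_ne_zero _)
  have g1 : ((p+1).factorial : ℂ) = (p+1) * p.factorial := by
    rw [Nat.factorial_succ]; push_cast; ring
  have g2 : ((p+2).factorial : ℂ) = (p+2) * (p+1).factorial := by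
    rw [show p + 2 = (p+1)+1 by omega, Nat.factorial_succ]; push_cast; ring
  have hAB : ((p+1).factorial : ℂ) * (p+2).factorial ≠ 0 := mul_ne_zero f1 f2
  have hCB : ((p).factorial : ℂ) * (p+2).factorial ≠ 0 := mul_ne_zero f3 f2
  have hAA : ((p+1).factorial : ℂ) * (p+1).factorial ≠ 0 := mul_ne_zero f1 f1
  rw [zero_add, sub_sub, sub_eq_zero, div_add_div _ _ hAB hCB,
    div_eq_div_iff hAA (mul_ne_zero hAB hCB), g2, g1]
  ring

private lemma stepA : (1 + PowerSeries.X) * besselZero - besselOne - PowerSeries.X * besselTwo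
    = besselZero := by
  ext n
  rw [map_sub, map_sub, add_mul, one_mul, map_add]
  cases n with
  | zero =>
    simp [besselZero, besselOne, besselTwo, PowerSeries.coeff_zero_X_mul]
  | succ k =>
    rw [PowerSeries.coeff_succ_X_mul, PowerSeries.coeff_succ_X_mul]
    simp only [besselZero, besselOne, besselTwo, PowerSeries.coeff_mk]
    rcases Nat.even_or_odd k with ⟨m, hm⟩ | ⟨m, hm⟩
    · subst hm
      have h1 : (m + m) % 2 = 0 := by omega
      have h2 : (m + m + 1) % 2 = 1 := by omega
      have h3 : (m + m) / 2 = m := by omega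
      have h4 : (m + m + 1 - 1) / 2 = m := by omega
      rw [if_neg (by omega), if_pos h1, if_pos h2, h3, h4]
      rcases Nat.eq_zero_or_pos m with rfl | hm
      · norm_num
      · have h5 : 2 ≤ m + m := by omega
        have h6 : (m + m - 2) / 2 = m - 1 := by omega
        rw [if_pos ⟨h5, h1⟩, h6]
        obtain ⟨p, rfl⟩ : ∃ p, m = p + 1 := ⟨m - 1, by omega⟩
        have e1 : p + 1 - 1 = p := by omega
        rw [e1]
        simp only [show p + 1 + 1 = p + 2 from rfl]
        exact fact_id p
    · subst hm
      have h1 : (2*m + 1) % 2 = 1 := by omega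
      have h2 : (2*m + 1 + 1) % 2 = 0 := by omega
      simp only [h1, h2]
      norm_num


private lemma stepB : expPS 2 * besselZero
    = PowerSeries.mk fun n => (((2*n).choose n : ℕ) : ℂ) / n.factorial := by
  ext n
  rw [PowerSeries.coeff_mk, PowerSeries.coeff_mul,
    Finset.Nat.sum_antidiagonal_eq_sum_range_succ
      (fun i j => (PowerSeries.coeff i) (expPS 2) * (PowerSeries.coeff j) besselZero) n,
    ← Finset.sum_range_reflect]
  have hn : ((n.factorial : ℂ)) ≠ 0 := Nat.cast_ne_zero.mpr (Nat.factorial_ne_zero _)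
  rw [eq_div_iff hn, Finset.sum_mul, ← keyJ n, Nat.cast_sum]
  refine Finset.sum_congr rfl fun j hj => ?_
  rw [Finset.mem_range] at hj
  have hj' : j ≤ n := Nat.lt_succ_iff.mp hj
  have e1 : n + 1 - 1 - j = n - j := by omega
  have e2 : n - (n - j) = j := by omega
  rw [e1, e2]
  simp only [expPS, besselZero, PowerSeries.coeff_mk]
  by_cases hpar : j % 2 = 0
  · rw [if_pos hpar, if_pos hpar]
    have hhalf : j - j / 2 = j / 2 := by omega
    have nat1 := Nat.choose_mul_factorial_mul_factorial hj'
    have nat2 := Nat.choose_mul_factorial_mul_factorial (Nat.div_le_self j 2)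
    rw [hhalf] at nat2
    have hfact : (n.factorial : ℂ)
        = (n.choose j) * ((j.choose (j/2)) * (j/2).factorial * (j/2).factorial)
          * (n-j).factorial := by
      rw [← nat2] at nat1
      exact_mod_cast congrArg (fun x => ((x : ℕ) : ℂ)) nat1.symm
    have fnj : (((n-j).factorial : ℕ) : ℂ) ≠ 0 := Nat.cast_ne_zero.mpr (Nat.factorial_ne_zero _)
    have fh : (((j/2).factorial : ℕ) : ℂ) ≠ 0 := Nat.cast_ne_zero.mpr (Nat.factorial_ne_zero _)
    rw [hfact]
    push_cast
    field_simp
  · rw [if_neg hpar, if_neg hpar]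
    simp

end Aux

/-- The exponential codimension series of `E ⊗ E`:
`1 + ∑_{n≥1} ((1/2)·binom(2n,n) + n + 1 − 2ⁿ)·tⁿ/n!
  = (1/2)·e^(2t)·((1+t)·I₀(2t) − I₁(2t) − t·I₂(2t)) + 1/2 + (1+t)·eᵗ − e^(2t)`. -/

theorem expCodimSeries_EtensorE :
    (PowerSeries.mk fun n =>
        if n = 0 then (1 : ℂ)
        else ((1 / 2) * (((2 * n).choose n : ℕ) : ℂ) + (n : ℂ) + 1 - 2 ^ n)
          / n.factorial) =
      PowerSeries.C (R := ℂ) (1 / 2) * expPS 2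
          * ((1 + PowerSeries.X) * besselZero - besselOne - PowerSeries.X * besselTwo)
        + PowerSeries.C (R := ℂ) (1 / 2) + (1 + PowerSeries.X) * expPS 1 - expPS 2 := by
  rw [stepA, mul_assoc, stepB]
  ext n
  rw [map_sub, map_add, map_add, PowerSeries.coeff_C_mul, add_mul, one_mul, map_add,
    PowerSeries.coeff_mk, PowerSeries.coeff_mk]
  simp only [expPS, PowerSeries.coeff_mk, one_pow]
  cases n with
  | zero =>
    rw [PowerSeries.coeff_zero_X_mul]
    norm_num
  | succ k =>
    rw [PowerSeries.coeff_succ_X_mul]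
    simp only [expPS, PowerSeries.coeff_mk, one_pow, PowerSeries.coeff_C,
      Nat.succ_ne_zero, if_false]
    have hk : ((k.factorial : ℕ) : ℂ) ≠ 0 := Nat.cast_ne_zero.mpr (Nat.factorial_ne_zero _)
    have hk1 : ((k : ℂ) + 1) ≠ 0 := Nat.cast_add_one_ne_zero k
    rw [Nat.factorial_succ]
    push_cast
    have hD : ((k:ℂ) + 1) * k.factorial ≠ 0 := mul_ne_zero hk1 hk
    have hrep : (1:ℂ) / (k.factorial : ℂ) = ((k:ℂ)+1) / (((k:ℂ)+1) * k.factorial) := by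
      rw [div_eq_div_iff hk hD]; ring
    rw [hrep]
    ring
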